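/- Let V be a unital Jordan algebra over ℝ, let a ≠ 0 and b ≠ 0 be idempotents and let 0 < λ < 1 satisfy 2a·(a·b) − a·b = λ·a and 2b·(b·a) − b·a = λ·b (i.e. P(a)b = λa and P(b)a = λb). Set p := a·b. Then: (i) a·p = ½(p + λa), b·p = ½(p + λb) and p·p = (λ/4)(a + b + 2p), so the ℝ-linear span of {a, b, p} is closed under multiplication and equals the subalgebra generated by a and b; (ii) a, b, p are linearly independent over ℝ; (iii) with θ := arccos(√λ) ∈ (0, π/2), there is a unique injective ℝ-linear map φ from the span of {a, b, p} into the 2×2 real matrices such that φ(x·y) = ½(φ(x)φ(y) + φ(y)φ(x)) for all x, y in the span, φ(a) = [[1,0],[0,0]] and φ(b) = [[cos²θ, ½ sin 2θ],[½ sin 2θ, sin²θ]]. -/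

import Mathlib

/-- The representation property of a linear map `φ : V → M₂(ℝ)` on the span of `{a, b, p}`
(where `p = a·b`): `φ` is injective on the span, satisfies
`φ(x·y) = ½(φ(x)φ(y) + φ(y)φ(x))` for `x, y` in the span, and sends `a` to
`[[1,0],[0,0]]` and `b` to `[[cos²θ, ½ sin 2θ],[½ sin 2θ, sin²θ]]`. -/
def IsAngleRep {V : Type*} [NonAssocRing V] [Module ℝ V]
    (a b p : V) (θ : ℝ) (φ : V →ₗ[ℝ] Matrix (Fin 2) (Fin 2) ℝ) : Prop :=
  Set.InjOn φ (Submodule.span ℝ ({a, b, p} : Set V)) ∧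
  (∀ x ∈ Submodule.span ℝ ({a, b, p} : Set V),
    ∀ y ∈ Submodule.span ℝ ({a, b, p} : Set V),
      φ (x * y) = (1 / 2 : ℝ) • (φ x * φ y + φ y * φ x)) ∧
  φ a = !![1, 0; 0, 0] ∧
  φ b = !![Real.cos θ ^ 2, (1 / 2) * Real.sin (2 * θ);
           (1 / 2) * Real.sin (2 * θ), Real.sin θ ^ 2]

set_option maxHeartbeats 1000000 in
/-- Let `a ≠ 0`, `b ≠ 0` be idempotents in a unital real Jordan algebra
with `P(a)b = λa` and `P(b)a = λb` for some `0 < λ < 1`, and set `p := a·b`.  Then: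
(i) `a·p = ½(p + λa)`, `b·p = ½(p + λb)`, `p·p = (λ/4)(a + b + 2p)`, and the linear span
of `{a, b, p}` is closed under multiplication; (ii) `a, b, p` are linearly independent;
(iii) with `θ := arccos √λ ∈ (0, π/2)` there is a unique (on the span) injective linear
representation sending `a ↦ [[1,0],[0,0]]` and `b ↦ B(θ)`. -/
theorem jordan_two_projection_subalgebra
    {V : Type*} [NonAssocRing V] [Module ℝ V] [SMulCommClass ℝ V V] [IsScalarTower ℝ V V]
    (comm : ∀ x y : V, x * y = y * x)
    (jordan : ∀ x y : V, (x * y) * (x * x) = x * (y * (x * x)))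
    (a b : V) (ha : a * a = a) (ha0 : a ≠ 0) (hb : b * b = b) (hb0 : b ≠ 0)
    (l : ℝ) (hl0 : 0 < l) (hl1 : l < 1)
    (hPa : (2 : ℝ) • (a * (a * b)) - a * b = l • a)
    (hPb : (2 : ℝ) • (b * (b * a)) - b * a = l • b)
    (p : V) (hp : p = a * b) :
    (a * p = (1 / 2 : ℝ) • (p + l • a) ∧
     b * p = (1 / 2 : ℝ) • (p + l • b) ∧
     p * p = (l / 4 : ℝ) • (a + b + (2 : ℝ) • p) ∧
     (∀ x ∈ Submodule.span ℝ ({a, b, p} : Set V),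
       ∀ y ∈ Submodule.span ℝ ({a, b, p} : Set V),
         x * y ∈ Submodule.span ℝ ({a, b, p} : Set V))) ∧
    LinearIndependent ℝ ![a, b, p] ∧
    (0 < Real.arccos (Real.sqrt l) ∧ Real.arccos (Real.sqrt l) < Real.pi / 2 ∧
     ∃ φ : V →ₗ[ℝ] Matrix (Fin 2) (Fin 2) ℝ,
       IsAngleRep a b p (Real.arccos (Real.sqrt l)) φ ∧
       ∀ ψ : V →ₗ[ℝ] Matrix (Fin 2) (Fin 2) ℝ,
         IsAngleRep a b p (Real.arccos (Real.sqrt l)) ψ →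
           ∀ x ∈ Submodule.span ℝ ({a, b, p} : Set V), ψ x = φ x) := by
  -- ## Part (i): the product relations
  have hab : a * b = p := hp.symm
  have hba : b * a = p := by rw [comm, ← hp]
  have hap : a * p = (1 / 2 : ℝ) • (p + l • a) := by
    have h2 : (2:ℝ) • (a * (a * b)) = a * b + l • a := by rw [← hPa]; abel
    have h3 : a * p = (1/2 : ℝ) • ((2:ℝ) • (a * (a*b))) := by
      rw [smul_smul, hp]; norm_num
    rw [h3, h2, hab]
  have hbp : b * p = (1 / 2 : ℝ) • (p + l • b) := by
    have h2 : (2:ℝ) • (b * (b * a)) = b * a + l • b := by rw [← hPb]; abel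
    have h3 : b * p = (1/2 : ℝ) • ((2:ℝ) • (b * (b*a))) := by
      rw [smul_smul, hp, comm a b]; norm_num
    rw [h3, h2, hba]
  have hpp : p * p = (l / 4 : ℝ) • (a + b + (2 : ℝ) • p) := by
    have h1 := jordan (a + b) b
    simp only [mul_add, add_mul, ha, hb, hab, hba] at h1
    simp only [comm p a, comm p b] at h1
    simp only [hap, hbp, mul_add, mul_smul_comm, smul_add, smul_smul, ha, hb, hab] at h1
    linear_combination (norm := module) (1/2 : ℝ) • h1
  -- ## Membership facts
  have haW : a ∈ Submodule.span ℝ ({a, b, p} : Set V) := Submodule.subset_span (by simp)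
  have hbW : b ∈ Submodule.span ℝ ({a, b, p} : Set V) := Submodule.subset_span (by simp)
  have hpW : p ∈ Submodule.span ℝ ({a, b, p} : Set V) := Submodule.subset_span (by simp)
  -- ## Closure under multiplication
  have hmulW : ∀ x ∈ Submodule.span ℝ ({a, b, p} : Set V),
      ∀ y ∈ Submodule.span ℝ ({a, b, p} : Set V),
        x * y ∈ Submodule.span ℝ ({a, b, p} : Set V) := by
    set W := Submodule.span ℝ ({a, b, p} : Set V) with hW
    have hgen : ∀ u ∈ ({a, b, p} : Set V), ∀ v ∈ ({a, b, p} : Set V), u * v ∈ W := by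
      rintro u (rfl | rfl | rfl) v (rfl | rfl | rfl)
      · rw [ha]; exact haW
      · rw [hab]; exact hpW
      · rw [hap]; exact W.smul_mem _ (W.add_mem hpW (W.smul_mem _ haW))
      · rw [hba]; exact hpW
      · rw [hb]; exact hbW
      · rw [hbp]; exact W.smul_mem _ (W.add_mem hpW (W.smul_mem _ hbW))
      · rw [comm, hap]; exact W.smul_mem _ (W.add_mem hpW (W.smul_mem _ haW))
      · rw [comm, hbp]; exact W.smul_mem _ (W.add_mem hpW (W.smul_mem _ hbW))
      · rw [hpp]; exact W.smul_mem _ (W.add_mem (W.add_mem haW hbW) (W.smul_mem _ hpW))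
    intro x hx
    induction hx using Submodule.span_induction with
    | mem u hu =>
      intro y hy
      induction hy using Submodule.span_induction with
      | mem v hv => exact hgen u hu v hv
      | zero => rw [mul_zero]; exact W.zero_mem
      | add y z _ _ h1 h2 => rw [mul_add]; exact W.add_mem h1 h2
      | smul r y _ h1 => rw [mul_smul_comm]; exact W.smul_mem _ h1
    | zero => intro y hy; rw [zero_mul]; exact W.zero_mem
    | add x z _ _ h1 h2 => intro y hy; rw [add_mul]; exact W.add_mem (h1 y hy) (h2 y hy)
    | smul r x _ h1 => intro y hy; rw [smul_mul_assoc]; exact W.smul_mem _ (h1 y hy)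
  -- ## Part (ii): linear independence
  have smulz : ∀ (r : ℝ) (x : V), x ≠ 0 → r • x = 0 → r = 0 := by
    intro r x hx h
    rcases smul_eq_zero.1 h with h | h
    · exact h
    · exact absurd h hx
  have haux : ∀ s t : ℝ, s • a + t • p = 0 → s = 0 ∧ t = 0 := by
    intro s t h
    have e1 := congrArg (fun z => a * z) h
    simp only [mul_add, mul_smul_comm, ha, hap, mul_zero] at e1
    have hsa : (s + t * l) • a = 0 := by
      linear_combination (norm := module) (2:ℝ) • e1 - h
    have hstl : s + t * l = 0 := smulz _ _ ha0 hsa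
    have e2 := congrArg (fun z => b * z) h
    simp only [mul_add, mul_smul_comm, hba, hbp, mul_zero] at e2
    have e3 := congrArg (fun z => b * z) e2
    simp only [mul_add, mul_smul_comm, smul_add, smul_smul, hbp, hb, mul_zero] at e3
    have hsb : (l * (s + t)) • b = 0 := by
      linear_combination (norm := module) (2:ℝ) • e3 - e2
    have hst : s + t = 0 := by
      have h' := smulz _ _ hb0 hsb
      rcases mul_eq_zero.1 h' with h'' | h''
      · linarith
      · exact h''
    have ht : t = 0 := by
      have h4 : t * (l - 1) = 0 := by linarith
      rcases mul_eq_zero.1 h4 with h' | h'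
      · exact h'
      · linarith
    exact ⟨by linarith, ht⟩
  have hauxb : ∀ s t : ℝ, s • b + t • p = 0 → s = 0 ∧ t = 0 := by
    intro s t h
    have e1 := congrArg (fun z => b * z) h
    simp only [mul_add, mul_smul_comm, hb, hbp, mul_zero] at e1
    have hsb : (s + t * l) • b = 0 := by
      linear_combination (norm := module) (2:ℝ) • e1 - h
    have hstl : s + t * l = 0 := smulz _ _ hb0 hsb
    have e2 := congrArg (fun z => a * z) h
    simp only [mul_add, mul_smul_comm, hab, hap, mul_zero] at e2
    have e3 := congrArg (fun z => a * z) e2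
    simp only [mul_add, mul_smul_comm, smul_add, smul_smul, hap, ha, mul_zero] at e3
    have hsa : (l * (s + t)) • a = 0 := by
      linear_combination (norm := module) (2:ℝ) • e3 - e2
    have hst : s + t = 0 := by
      have h' := smulz _ _ ha0 hsa
      rcases mul_eq_zero.1 h' with h'' | h''
      · linarith
      · exact h''
    have ht : t = 0 := by
      have h4 : t * (l - 1) = 0 := by linarith
      rcases mul_eq_zero.1 h4 with h' | h'
      · exact h'
      · linarith
    exact ⟨by linarith, ht⟩
  have hli : LinearIndependent ℝ ![a, b, p] := by
    refine Fintype.linearIndependent_iff.2 fun g hg => ?_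
    rw [Fin.sum_univ_three] at hg
    simp only [Matrix.cons_val_zero, Matrix.cons_val_one, Matrix.head_cons,
      Matrix.cons_val_two, Matrix.tail_cons] at hg
    have e1 := congrArg (fun z => a * z) hg
    simp only [mul_add, mul_smul_comm, ha, hab, hap, mul_zero] at e1
    have eA : (g 0 + g 2 * (l/2)) • a + (g 1 + g 2 * (1/2)) • p = 0 := by
      linear_combination (norm := module) e1
    obtain ⟨hA1, hA2⟩ := haux _ _ eA
    have e2 := congrArg (fun z => b * z) hg
    simp only [mul_add, mul_smul_comm, hb, hba, hbp, mul_zero] at e2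
    have eB : (g 1 + g 2 * (l/2)) • b + (g 0 + g 2 * (1/2)) • p = 0 := by
      linear_combination (norm := module) e2
    obtain ⟨hB1, hB2⟩ := hauxb _ _ eB
    have hg2 : g 2 = 0 := by
      have h4 : g 2 * (1 - l) = 0 := by linarith
      rcases mul_eq_zero.1 h4 with h' | h'
      · exact h'
      · linarith
    intro i
    fin_cases i <;> simp <;> linarith
  -- ## Part (iii): trigonometric facts
  set θ := Real.arccos (Real.sqrt l) with hθdef
  have hsl : Real.sqrt l ^ 2 = l := Real.sq_sqrt hl0.le
  have hsl1 : Real.sqrt l < 1 := by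
    nlinarith [Real.sqrt_nonneg l, Real.sq_sqrt hl0.le]
  have hsl0 : 0 < Real.sqrt l := Real.sqrt_pos.2 hl0
  have hθ0 : 0 < θ := Real.arccos_pos.2 hsl1
  have hθ2 : θ < Real.pi / 2 := Real.arccos_lt_pi_div_two.2 hsl0
  have hcv : Real.cos θ = Real.sqrt l :=
    Real.cos_arccos (by linarith [Real.sqrt_nonneg l]) hsl1.le
  have hc2 : Real.cos θ ^ 2 = l := by rw [hcv, hsl]
  have hs2 : Real.sin θ ^ 2 = 1 - l := by
    have := Real.sin_sq_add_cos_sq θ; linarith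
  have hs0 : 0 < Real.sin θ := Real.sin_pos_of_pos_of_lt_pi hθ0 (by linarith [Real.pi_pos])
  have hc0 : 0 < Real.cos θ := by rw [hcv]; exact hsl0
  have hq : (1/2 : ℝ) * Real.sin (2*θ) = Real.sin θ * Real.cos θ := by
    rw [Real.sin_two_mul]; ring
  set c := Real.cos θ with hcdef
  set s := Real.sin θ with hsdef
  have hcs : c ^ 2 + s ^ 2 = 1 := by rw [hc2, hs2]; ring
  -- ## the three matrices
  set A : Matrix (Fin 2) (Fin 2) ℝ := !![1, 0; 0, 0] with hA
  set Bm : Matrix (Fin 2) (Fin 2) ℝ := !![c^2, s*c; s*c, s^2] with hBm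
  set Pm : Matrix (Fin 2) (Fin 2) ℝ := !![c^2, s*c/2; s*c/2, 0] with hPmdef
  have mAA : (1/2 : ℝ) • (A * A + A * A) = A := by
    ext i j; fin_cases i <;> fin_cases j <;>
      simp [hA, Matrix.mul_apply, Fin.sum_univ_two] <;> norm_num
  have mAB : (1/2 : ℝ) • (A * Bm + Bm * A) = Pm := by
    ext i j; fin_cases i <;> fin_cases j <;>
      simp [hA, hBm, hPmdef, Matrix.mul_apply, Fin.sum_univ_two] <;> ring
  have mAP : (1/2 : ℝ) • (A * Pm + Pm * A) = (1/2 : ℝ) • (Pm + l • A) := by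
    ext i j; fin_cases i <;> fin_cases j <;>
      simp [hA, hPmdef, Matrix.mul_apply, Fin.sum_univ_two] <;>
      first
        | ring1
        | linear_combination hc2
        | linear_combination (1/2 : ℝ) * hc2
  have mBB : (1/2 : ℝ) • (Bm * Bm + Bm * Bm) = Bm := by
    ext i j; fin_cases i <;> fin_cases j <;>
      simp [hBm, Matrix.mul_apply, Fin.sum_univ_two] <;>
      first
        | ring1
        | linear_combination (c^2) * hcs
        | linear_combination (s*c) * hcs
        | linear_combination (c*s) * hcs
        | linear_combination (s^2) * hcs
  have mBP : (1/2 : ℝ) • (Bm * Pm + Pm * Bm) = (1/2 : ℝ) • (Pm + l • Bm) := by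
    ext i j; fin_cases i <;> fin_cases j <;>
      simp [hBm, hPmdef, Matrix.mul_apply, Fin.sum_univ_two] <;>
      first
        | ring1
        | linear_combination (c^2/2) * hcs + (c^2/2) * hc2
        | linear_combination (c^2) * hcs + (c^2) * hc2
        | linear_combination (s*c/4) * hcs + (s*c/2) * hc2
        | linear_combination (s*c/2) * hcs + (s*c) * hc2
        | linear_combination (c*s/2) * hcs + (c*s) * hc2
        | linear_combination (s^2/2) * hc2
        | linear_combination (s^2) * hc2
  have mPP : (1/2 : ℝ) • (Pm * Pm + Pm * Pm) = (l/4 : ℝ) • (A + Bm + (2:ℝ) • Pm) := by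
    ext i j; fin_cases i <;> fin_cases j <;>
      simp [hA, hBm, hPmdef, Matrix.mul_apply, Fin.sum_univ_two] <;>
      first
        | ring1
        | linear_combination (c^2/4) * hcs + ((1+3*c^2)/4) * hc2
        | linear_combination (c^2/2) * hcs + ((1+3*c^2)/2) * hc2
        | linear_combination (c^2) * hcs + (1+3*c^2) * hc2
        | linear_combination (s*c/2) * hc2
        | linear_combination (s*c) * hc2
        | linear_combination (c*s) * hc2
        | linear_combination (c*s/2) * hc2
        | linear_combination (s^2/4) * hc2
        | linear_combination (s^2/2) * hc2
        | linear_combination (s^2) * hc2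
  -- linear independence of the matrices
  have hMindep : ∀ r0 r1 r2 : ℝ, r0 • A + r1 • Bm + r2 • Pm = 0 →
      r0 = 0 ∧ r1 = 0 ∧ r2 = 0 := by
    intro r0 r1 r2 h
    have h11 := congrFun (congrFun h 1) 1
    simp [hA, hBm, hPmdef] at h11
    have hr1 : r1 = 0 := by
      rcases h11 with h' | h'
      · exact h'
      · exact absurd h' (ne_of_gt hs0)
    have h01 := congrFun (congrFun h 0) 1
    simp [hA, hBm, hPmdef, hr1] at h01
    have hr2 : r2 = 0 := by
      rcases h01 with h' | h' | h'
      · exact h'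
      · exact absurd h' (ne_of_gt hs0)
      · exact absurd h' (ne_of_gt hc0)
    have h00 := congrFun (congrFun h 0) 0
    simp [hA, hBm, hPmdef, hr1, hr2] at h00
    exact ⟨h00, hr1, hr2⟩
  -- ## construction of φ
  have hrange : Set.range ![a, b, p] = ({a, b, p} : Set V) := by
    ext x
    simp only [Set.mem_range, Set.mem_insert_iff, Set.mem_singleton_iff]
    constructor
    · rintro ⟨i, rfl⟩; fin_cases i <;> simp
    · rintro (rfl | rfl | rfl)
      exacts [⟨0, rfl⟩, ⟨1, rfl⟩, ⟨2, rfl⟩]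
  obtain ⟨W2, hcompl⟩ := Submodule.exists_isCompl (Submodule.span ℝ (Set.range ![a, b, p]))
  set M : Fin 3 → Matrix (Fin 2) (Fin 2) ℝ := ![A, Bm, Pm] with hM
  set φ : V →ₗ[ℝ] Matrix (Fin 2) (Fin 2) ℝ :=
    ((Module.Basis.span hli).constr ℝ M).comp
      ((Submodule.span ℝ (Set.range ![a, b, p])).linearProjOfIsCompl W2 hcompl :
        V →ₗ[ℝ] Submodule.span ℝ (Set.range ![a, b, p])) with hφdef
  have key : ∀ i : Fin 3, φ (![a,b,p] i) = M i := by
    intro i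
    have hmem : ![a,b,p] i ∈ Submodule.span ℝ (Set.range ![a, b, p]) :=
      Submodule.subset_span ⟨i, rfl⟩
    have h1 : (Submodule.span ℝ (Set.range ![a, b, p])).linearProjOfIsCompl W2 hcompl
        (![a,b,p] i) = ⟨![a,b,p] i, hmem⟩ :=
      Submodule.linearProjOfIsCompl_apply_left hcompl ⟨![a,b,p] i, hmem⟩
    have h2 : (⟨![a,b,p] i, hmem⟩ : Submodule.span ℝ (Set.range ![a, b, p]))
        = Module.Basis.span hli i := (Module.Basis.span_apply hli i).symm
    simp only [hφdef, LinearMap.comp_apply, h1, h2, Module.Basis.constr_basis]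
  have hφa : φ a = A := by simpa [hM] using key 0
  have hφb : φ b = Bm := by simpa [hM] using key 1
  have hφp : φ p = Pm := by simpa [hM] using key 2
  -- representation of span elements
  have hrep : ∀ x ∈ Submodule.span ℝ ({a, b, p} : Set V),
      ∃ r : Fin 3 → ℝ, x = r 0 • a + r 1 • b + r 2 • p := by
    intro x hx
    rw [← hrange] at hx
    obtain ⟨r, hr⟩ := Submodule.mem_span_range_iff_exists_fun ℝ |>.1 hx
    refine ⟨r, ?_⟩
    rw [← hr, Fin.sum_univ_three]
    simp
  -- injectivity of φ on the span
  have hinj : Set.InjOn φ (Submodule.span ℝ ({a, b, p} : Set V)) := by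
    intro x hx y hy hxy
    have hz : x - y ∈ Submodule.span ℝ ({a, b, p} : Set V) := sub_mem hx hy
    obtain ⟨r, hr⟩ := hrep _ hz
    have hφz : φ (x - y) = 0 := by rw [map_sub, hxy, sub_self]
    rw [hr] at hφz
    simp only [map_add, map_smul, hφa, hφb, hφp] at hφz
    obtain ⟨h0, h1, h2⟩ := hMindep _ _ _ hφz
    have : x - y = 0 := by rw [hr, h0, h1, h2]; simp
    exact sub_eq_zero.1 this
  -- multiplicativity of φ on the span
  have hmulφ : ∀ x ∈ Submodule.span ℝ ({a, b, p} : Set V),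
      ∀ y ∈ Submodule.span ℝ ({a, b, p} : Set V),
        φ (x * y) = (1 / 2 : ℝ) • (φ x * φ y + φ y * φ x) := by
    intro x hx y hy
    obtain ⟨r, hr⟩ := hrep x hx
    obtain ⟨u, hu⟩ := hrep y hy
    rw [hr, hu]
    simp only [add_mul, mul_add, smul_mul_assoc, mul_smul_comm,
      ha, hb, hab, hba, comm p a, comm p b, hap, hbp, hpp]
    simp only [map_add, map_smul, hφa, hφb, hφp]
    simp only [Matrix.add_mul, Matrix.mul_add, Matrix.smul_mul, Matrix.mul_smul]
    linear_combination (norm := module)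
      (-(r 0 * u 0)) • mAA + (-(r 0 * u 1 + r 1 * u 0)) • mAB +
      (-(r 0 * u 2 + r 2 * u 0)) • mAP + (-(r 1 * u 1)) • mBB +
      (-(r 1 * u 2 + r 2 * u 1)) • mBP + (-(r 2 * u 2)) • mPP
  -- φ b matches the required literal matrix
  have hBL : Bm = !![c ^ 2, (1/2) * Real.sin (2*θ);
      (1/2) * Real.sin (2*θ), s ^ 2] := by
    rw [hq, hBm]
  refine ⟨⟨hap, hbp, hpp, hmulW⟩, hli, hθ0, hθ2, φ, ⟨hinj, hmulφ, hφa, ?_⟩, ?_⟩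
  · rw [hφb, hBL]
  · -- uniqueness on the span
    intro ψ hψ x hx
    obtain ⟨ψinj, ψmul, hψa, hψb⟩ := hψ
    have hψb' : ψ b = Bm := by rw [hψb, ← hBL]
    have hψp : ψ p = Pm := by
      have := ψmul a haW b hbW
      rw [hab] at this
      rw [this, hψa, hψb', ← hA, mAB]
    obtain ⟨r, hr⟩ := hrep x hx
    rw [hr]
    simp only [map_add, map_smul, hφa, hφb, hφp, hψa, hψb', hψp, hA]
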